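/- Let n = 3k+2 where k ≥ 1 is odd. Then: (a) every downhill weighing a : {1,…,n} → ℤ (a(1) > … > a(n)) with Σ_{i=1}^n i·a(i) ∈ {0, −1} has total weight Σ_{i=1}^n i·|a(i)| ≥ (8k³+24k²+22k+6)/3; and (b) there exists a downhill weighing a with Σ_{i=1}^n i·a(i) = 0 (a balance) whose total weight equals (8k³+24k²+22k+6)/3. Hence the minimum total weight of a downhill weighing that is balanced or a tight imbalance is (8k³+24k²+22k+6)/3, achieved by a balance. -/

import Mathlib

open Finset

private lemma sumlin (C : ℤ) (n : ℕ) :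
    6 * ∑ i ∈ Icc 1 n, (i : ℤ) * (C - i) = n * (n + 1) * (3 * C - (2 * n + 1)) := by
  induction n with
  | zero => simp
  | succ n ih =>
    rw [Finset.sum_Icc_succ_top (by omega), mul_add, ih]
    push_cast
    ring

private lemma sumquad (m r : ℕ) :
    6 * ∑ i ∈ Icc m (m + r), (i : ℤ) * ((i : ℤ) - m) =
      r * (r + 1) * (3 * m + 2 * r + 1) := by
  induction r with
  | zero => simp
  | succ r ih =>
    have h : m + (r + 1) = (m + r) + 1 := by omega
    rw [h, Finset.sum_Icc_succ_top (by omega), mul_add, ih]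
    push_cast
    ring

private lemma split_sum (f : ℕ → ℤ) {m n : ℕ} (h : m ≤ n) :
    ∑ i ∈ Icc 1 n, f i = (∑ i ∈ Icc 1 m, f i) + ∑ i ∈ Icc (m + 1) n, f i := by
  rw [show (1:ℕ) = 0 + 1 from rfl, Finset.Icc_add_one_left_eq_Ioc, Finset.Icc_add_one_left_eq_Ioc, zero_add, Finset.Icc_add_one_left_eq_Ioc]
  exact (Finset.sum_Ioc_consecutive f (Nat.zero_le m) h).symm

private lemma stair {n : ℕ} {a : ℕ → ℤ}
    (hd : ∀ i j : ℕ, 1 ≤ i → i < j → j ≤ n → a j < a i) :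
    ∀ d i : ℕ, 1 ≤ i → i + d ≤ n → a (i + d) + (d : ℤ) ≤ a i := by
  intro d
  induction d with
  | zero => intro i _ _; simp
  | succ d ih =>
    intro i hi hle
    have h1 : a ((i + 1) + d) + (d : ℤ) ≤ a (i + 1) := ih (i + 1) (by omega) (by omega)
    have h2 : a (i + 1) < a i := hd i (i + 1) hi (by omega) (by omega)
    have h3 : i + (d + 1) = (i + 1) + d := by omega
    rw [h3]
    push_cast
    push_cast at h1
    linarith

private lemma lower (k n : ℕ) (hk : 1 ≤ k) (hn : n = 3 * k + 2) :
    ∀ a : ℕ → ℤ, (∀ i j : ℕ, 1 ≤ i → i < j → j ≤ n → a j < a i) →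
      (∑ i ∈ Finset.Icc 1 n, (i : ℤ) * a i = 0 ∨
        ∑ i ∈ Finset.Icc 1 n, (i : ℤ) * a i = -1) →
      8 * (k : ℤ) ^ 3 + 24 * (k : ℤ) ^ 2 + 22 * (k : ℤ) + 6 ≤
        3 * ∑ i ∈ Finset.Icc 1 n, (i : ℤ) * |a i| := by
  intro a hd hS
  have hS' : -1 ≤ ∑ i ∈ Icc 1 n, (i : ℤ) * a i ∧ ∑ i ∈ Icc 1 n, (i : ℤ) * a i ≤ 0 := by
    rcases hS with h | h <;> rw [h] <;> constructor <;> norm_num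
  rcases le_or_gt 1 (a (2 * k + 1)) with hA | hB
  · -- Case A : a (2k+1) ≥ 1, positives are heavy
    have hsW := split_sum (fun i => (i : ℤ) * |a i|) (show 2 * k + 1 ≤ n by omega)
    have hsS := split_sum (fun i => (i : ℤ) * a i) (show 2 * k + 1 ≤ n by omega)
    -- first block: a i ≥ 2k+2-i
    have key1 : ∀ i ∈ Icc 1 (2 * k + 1), (i : ℤ) * (2 * (k:ℤ) + 2 - i) ≤ (i : ℤ) * a i := by
      intro i hi
      simp only [mem_Icc] at hi
      have hst := stair hd (2 * k + 1 - i) i hi.1 (by omega)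
      rw [show i + (2 * k + 1 - i) = 2 * k + 1 by omega] at hst
      have hc : ((2 * k + 1 - i : ℕ) : ℤ) = 2 * (k:ℤ) + 1 - i := by
        have : (i : ℤ) ≤ 2 * k + 1 := by exact_mod_cast hi.2
        push_cast [Nat.cast_sub hi.2]
        ring
      rw [hc] at hst
      have hbound : 2 * (k:ℤ) + 2 - i ≤ a i := by linarith
      exact mul_le_mul_of_nonneg_left hbound (by positivity)
    have hQ : ∑ i ∈ Icc 1 (2 * k + 1), (i : ℤ) * (2 * (k:ℤ) + 2 - i)
        ≤ ∑ i ∈ Icc 1 (2 * k + 1), (i : ℤ) * a i := Finset.sum_le_sum key1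
    have h6 := sumlin (2 * (k:ℤ) + 2) (2 * k + 1)
    have hc1 : ((2 * k + 1 : ℕ) : ℤ) = 2 * (k : ℤ) + 1 := by push_cast; ring
    rw [hc1] at h6
    -- i * a i ≤ i * |a i| on first block
    have hW1 : ∑ i ∈ Icc 1 (2 * k + 1), (i : ℤ) * a i
        ≤ ∑ i ∈ Icc 1 (2 * k + 1), (i : ℤ) * |a i| := by
      apply Finset.sum_le_sum
      intro i _
      exact mul_le_mul_of_nonneg_left (le_abs_self _) (by positivity)
    -- -(i * a i) ≤ i * |a i| on second block
    have hW2 : -∑ i ∈ Icc (2 * k + 1 + 1) n, (i : ℤ) * a i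
        ≤ ∑ i ∈ Icc (2 * k + 1 + 1) n, (i : ℤ) * |a i| := by
      rw [← Finset.sum_neg_distrib]
      apply Finset.sum_le_sum
      intro i _
      rw [← mul_neg]
      exact mul_le_mul_of_nonneg_left (neg_le_abs _) (by positivity)
    have hring : (2 * (k:ℤ) + 1) * (2 * (k:ℤ) + 1 + 1) * (3 * (2 * (k:ℤ) + 2) - (2 * (2 * (k:ℤ) + 1) + 1))
        = 8 * (k : ℤ) ^ 3 + 24 * (k : ℤ) ^ 2 + 22 * (k : ℤ) + 6 := by ring
    linarith [hS'.1, hS'.2]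
  · -- Case B : a (2k+1) ≤ 0, negatives are heavy
    have hB0 : a (2 * k + 1) ≤ 0 := by omega
    have hsW := split_sum (fun i => (i : ℤ) * |a i|) (show 2 * k ≤ n by omega)
    have hsS := split_sum (fun i => (i : ℤ) * a i) (show 2 * k ≤ n by omega)
    have key2 : ∀ i ∈ Icc (2 * k + 1) n,
        (i : ℤ) * ((i : ℤ) - (2 * (k:ℤ) + 1)) ≤ (i : ℤ) * (-(a i)) := by
      intro i hi
      simp only [mem_Icc] at hi
      have hst := stair hd (i - (2 * k + 1)) (2 * k + 1) (by omega) (by omega)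
      rw [show 2 * k + 1 + (i - (2 * k + 1)) = i by omega] at hst
      have hc : ((i - (2 * k + 1) : ℕ) : ℤ) = (i : ℤ) - (2 * (k:ℤ) + 1) := by
        push_cast [Nat.cast_sub hi.1]
        ring
      rw [hc] at hst
      have hbound : (i : ℤ) - (2 * (k:ℤ) + 1) ≤ -(a i) := by linarith
      exact mul_le_mul_of_nonneg_left hbound (by positivity)
    have hGle : ∑ i ∈ Icc (2 * k + 1) n, (i : ℤ) * ((i : ℤ) - (2 * (k:ℤ) + 1))
        ≤ -∑ i ∈ Icc (2 * k + 1) n, (i : ℤ) * a i := by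
      rw [← Finset.sum_neg_distrib]
      apply Finset.sum_le_sum
      intro i hi
      rw [← mul_neg]
      exact key2 i hi
    have hW2 : ∑ i ∈ Icc (2 * k + 1) n, (i : ℤ) * ((i : ℤ) - (2 * (k:ℤ) + 1))
        ≤ ∑ i ∈ Icc (2 * k + 1) n, (i : ℤ) * |a i| := by
      apply Finset.sum_le_sum
      intro i hi
      exact le_trans (key2 i hi) (mul_le_mul_of_nonneg_left (neg_le_abs _) (by positivity))
    have hW1 : ∑ i ∈ Icc 1 (2 * k), (i : ℤ) * a i
        ≤ ∑ i ∈ Icc 1 (2 * k), (i : ℤ) * |a i| := by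
      apply Finset.sum_le_sum
      intro i _
      exact mul_le_mul_of_nonneg_left (le_abs_self _) (by positivity)
    have h6 := sumquad (2 * k + 1) (k + 1)
    rw [show 2 * k + 1 + (k + 1) = n by omega] at h6
    have hc1 : ((2 * k + 1 : ℕ) : ℤ) = 2 * (k : ℤ) + 1 := by push_cast; ring
    rw [hc1] at h6
    have h6' : 6 * ∑ i ∈ Icc (2 * k + 1) n, (i : ℤ) * ((i : ℤ) - (2 * (k:ℤ) + 1))
        = 8 * (k : ℤ) ^ 3 + 24 * (k : ℤ) ^ 2 + 22 * (k : ℤ) + 6 + 6 * ((k:ℤ) + 1) ^ 2 := by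
      rw [h6]; push_cast; ring
    have hksq : 1 ≤ (k : ℤ) := by exact_mod_cast hk
    have : 6 * ((k:ℤ) + 1) ^ 2 ≥ 24 := by nlinarith
    linarith [hS'.1, hS'.2]


private lemma sumlin' (C : ℤ) (n : ℕ) :
    6 * ∑ i ∈ Icc 1 n, (i : ℤ) * (C - i) = n * (n + 1) * (3 * C - (2 * n + 1)) := by
  induction n with
  | zero => simp
  | succ n ih =>
    rw [Finset.sum_Icc_succ_top (by omega), mul_add, ih]
    push_cast
    ring

private lemma split_sum' (f : ℕ → ℤ) {m n : ℕ} (h : m ≤ n) :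
    ∑ i ∈ Icc 1 n, f i = (∑ i ∈ Icc 1 m, f i) + ∑ i ∈ Icc (m + 1) n, f i := by
  rw [show (1:ℕ) = 0 + 1 from rfl, Finset.Icc_add_one_left_eq_Ioc, Finset.Icc_add_one_left_eq_Ioc, zero_add, Finset.Icc_add_one_left_eq_Ioc]
  exact (Finset.sum_Ioc_consecutive f (Nat.zero_le m) h).symm

private lemma exist (k n : ℕ) (hk : 1 ≤ k) (hodd : Odd k) (hn : n = 3 * k + 2) :
    ∃ a : ℕ → ℤ, (∀ i j : ℕ, 1 ≤ i → i < j → j ≤ n → a j < a i) ∧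
      ∑ i ∈ Finset.Icc 1 n, (i : ℤ) * a i = 0 ∧
      3 * ∑ i ∈ Finset.Icc 1 n, (i : ℤ) * |a i| =
        8 * (k : ℤ) ^ 3 + 24 * (k : ℤ) ^ 2 + 22 * (k : ℤ) + 6 := by
  obtain ⟨c, hc⟩ := hodd
  have hkc : (k : ℤ) = 2 * c + 1 := by exact_mod_cast hc
  have hcnn : (0:ℤ) ≤ (c:ℤ) := by positivity
  refine ⟨fun i => if i ≤ 3 * k + 1 then 2 * (k:ℤ) + 2 - i else -((k : ℤ) + c + 1),
    ?_, ?_, ?_⟩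
  · intro i j hi hij hjn
    by_cases hj : j ≤ 3 * k + 1
    · have hii : i ≤ 3 * k + 1 := by omega
      simp only [if_pos hj, if_pos hii]
      have : (i : ℤ) < j := by exact_mod_cast hij
      linarith
    · have hii : i ≤ 3 * k + 1 := by omega
      simp only [if_neg hj, if_pos hii]
      have : (i : ℤ) ≤ 3 * k + 1 := by exact_mod_cast hii
      linarith
  · -- balance
    rw [show n = (3 * k + 1) + 1 from by omega, Finset.sum_Icc_succ_top (by omega)]
    simp only
    have hcong : ∑ i ∈ Icc 1 (3 * k + 1), (i : ℤ) *
        (if i ≤ 3 * k + 1 then 2 * (k:ℤ) + 2 - i else -((k : ℤ) + c + 1))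
        = ∑ i ∈ Icc 1 (3 * k + 1), (i : ℤ) * (2 * (k:ℤ) + 2 - i) := by
      apply Finset.sum_congr rfl
      intro i hi
      simp only [mem_Icc] at hi
      rw [if_pos hi.2]
    rw [hcong, if_neg (by omega)]
    have h6 := sumlin' (2 * (k:ℤ) + 2) (3 * k + 1)
    push_cast at h6 ⊢
    nlinarith [h6]
  · -- weight
    have hsplit := split_sum' (fun i => (i : ℤ) *
        |if i ≤ 3 * k + 1 then 2 * (k:ℤ) + 2 - i else -((k : ℤ) + c + 1)|)
        (show 2 * k + 2 ≤ n by omega)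
    rw [hsplit]
    have h1 : ∑ i ∈ Icc 1 (2 * k + 2), (i : ℤ) *
        |if i ≤ 3 * k + 1 then 2 * (k:ℤ) + 2 - i else -((k : ℤ) + c + 1)|
        = ∑ i ∈ Icc 1 (2 * k + 2), (i : ℤ) * (2 * (k:ℤ) + 2 - i) := by
      apply Finset.sum_congr rfl
      intro i hi
      simp only [mem_Icc] at hi
      rw [if_pos (by omega), abs_of_nonneg]
      have : (i : ℤ) ≤ 2 * k + 2 := by exact_mod_cast hi.2
      linarith
    have h2 : ∑ i ∈ Icc (2 * k + 2 + 1) n, (i : ℤ) *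
        |if i ≤ 3 * k + 1 then 2 * (k:ℤ) + 2 - i else -((k : ℤ) + c + 1)|
        = (∑ i ∈ Icc (2 * k + 3) (3 * k + 1), (i : ℤ) * ((i : ℤ) - (2 * (k:ℤ) + 2)))
          + ((3 * (k:ℤ) + 2)) * ((k : ℤ) + c + 1) := by
      rw [show 2 * k + 2 + 1 = 2 * k + 3 from rfl,
        show n = (3 * k + 1) + 1 from by omega, Finset.sum_Icc_succ_top (by omega)]
      congr 1
      · apply Finset.sum_congr rfl
        intro i hi
        simp only [mem_Icc] at hi
        rw [if_pos hi.2, abs_of_nonpos]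
        · ring
        · have : (2 * k + 3 : ℤ) ≤ (i : ℤ) := by exact_mod_cast hi.1
          linarith
      · rw [if_neg (by omega), abs_neg, abs_of_nonneg (by linarith)]
        push_cast
        ring
    rw [h1, h2]
    have hA := sumlin' (2 * (k:ℤ) + 2) (2 * k + 2)
    have hBq : ∑ i ∈ Icc (2 * k + 3) (3 * k + 1), (i : ℤ) * ((i : ℤ) - (2 * (k:ℤ) + 2))
        = -(∑ i ∈ Icc 1 (3 * k + 1), (i : ℤ) * (2 * (k:ℤ) + 2 - i))
          + ∑ i ∈ Icc 1 (2 * k + 2), (i : ℤ) * (2 * (k:ℤ) + 2 - i) := by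
      have hs := split_sum' (fun i => (i : ℤ) * (2 * (k:ℤ) + 2 - i))
        (show 2 * k + 2 ≤ 3 * k + 1 by omega)
      have hneg : ∑ i ∈ Icc (2 * k + 2 + 1) (3 * k + 1), (i : ℤ) * (2 * (k:ℤ) + 2 - i)
          = -∑ i ∈ Icc (2 * k + 3) (3 * k + 1), (i : ℤ) * ((i : ℤ) - (2 * (k:ℤ) + 2)) := by
        rw [← Finset.sum_neg_distrib]
        apply Finset.sum_congr (by norm_num)
        intro i _
        ring
      rw [hneg] at hs
      linarith
    rw [hBq]
    have hC := sumlin' (2 * (k:ℤ) + 2) (3 * k + 1)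
    push_cast at hA hC ⊢
    nlinarith [hA, hC]


/-- For `n = 3k+2` with `k` odd, the minimum total weight of a downhill
weighing that is a balance or a tight imbalance equals
`(8k³+24k²+22k+6)/3`, achieved by a balance. (Stated with both sides
multiplied by 3.) -/
theorem min_weight_three_k_plus_two_odd (k n : ℕ) (hk : 1 ≤ k) (hodd : Odd k)
    (hn : n = 3 * k + 2) :
    (∀ a : ℕ → ℤ, (∀ i j : ℕ, 1 ≤ i → i < j → j ≤ n → a j < a i) →
      (∑ i ∈ Finset.Icc 1 n, (i : ℤ) * a i = 0 ∨
        ∑ i ∈ Finset.Icc 1 n, (i : ℤ) * a i = -1) →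
      8 * (k : ℤ) ^ 3 + 24 * (k : ℤ) ^ 2 + 22 * (k : ℤ) + 6 ≤
        3 * ∑ i ∈ Finset.Icc 1 n, (i : ℤ) * |a i|) ∧
    (∃ a : ℕ → ℤ, (∀ i j : ℕ, 1 ≤ i → i < j → j ≤ n → a j < a i) ∧
      ∑ i ∈ Finset.Icc 1 n, (i : ℤ) * a i = 0 ∧
      3 * ∑ i ∈ Finset.Icc 1 n, (i : ℤ) * |a i| =
        8 * (k : ℤ) ^ 3 + 24 * (k : ℤ) ^ 2 + 22 * (k : ℤ) + 6) := by
  exact ⟨lower k n hk hn, exist k n hk hodd hn⟩
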